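/- For any propositional disjunctive logic program P, the well-founded disjunctive hypothesis WFDH(P) is self-consistent (it does not attack itself), and consequently WFDS(P) = WFDH(P) ∪ cons_P(WFDH(P)) is a consistent model state. -/

import Mathlib

open scoped Classical

namespace DLP

/-- A (propositional) rule `a₁ ∨ ⋯ ∨ aₙ ← b₁, …, bₘ, not c₁, …, not cₜ`,
with head atoms `head`, positive body atoms `bodyPos` and (default-)negated
body atoms `bodyNeg` (heads and bodies are sets of literals). -/
structure Rule (Atom : Type) where
  head : Finset Atom
  bodyPos : Finset Atom
  bodyNeg : Finset Atom

/-- A pure disjunction: a (positive) disjunction of atoms, or a (negative)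
disjunction of default-negated atoms. -/
inductive PDisj (Atom : Type) where
  | pos : Finset Atom → PDisj Atom
  | neg : Finset Atom → PDisj Atom

/-- The atoms occurring in a pure disjunction. -/
def PDisj.atomsOf {Atom : Type} : PDisj Atom → Finset Atom
  | .pos A => A
  | .neg A => A

/-- Sub-disjunction relation between pure disjunctions (same polarity). -/
def SubDisj {Atom : Type} : PDisj Atom → PDisj Atom → Prop
  | .pos A, .pos B => A ⊆ B
  | .neg A, .neg B => A ⊆ B
  | .pos _, .neg _ => False
  | .neg _, .pos _ => False

/-- A disjunctive logic program: a set of rules (over a finite atom alphabet,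
so every program is finite). -/
abbrev Program (Atom : Type) := Set (Rule Atom)

variable {Atom : Type} [Fintype Atom] [DecidableEq Atom]

/-- Well-formedness: every rule head is nonempty (n > 0). -/
def IsProgram (P : Program Atom) : Prop := ∀ r ∈ P, r.head.Nonempty

/-- The atoms occurring in rule heads of `P`. -/
def heads (P : Program Atom) : Set Atom := {a | ∃ r ∈ P, a ∈ r.head}

/-- Closure of a set of pure disjunctions under super-disjunctions
(model states are assumed closed under implication of pure disjunctions). -/
def stClosure (S : Set (PDisj Atom)) : Set (PDisj Atom) := {d' | ∃ d ∈ S, SubDisj d d'}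

/-- A model state: a set of (nonempty) pure disjunctions closed under
super-disjunctions. -/
def IsModelState (S : Set (PDisj Atom)) : Prop :=
  (∀ d ∈ S, (PDisj.atomsOf d).Nonempty) ∧ ∀ d ∈ S, ∀ d', SubDisj d d' → d' ∈ S

/-- Consistency of a model state. -/
def ConsistentState (S : Set (PDisj Atom)) : Prop :=
  (¬ ∃ A : Finset Atom, A.Nonempty ∧ PDisj.pos A ∈ S ∧ ∀ a ∈ A, PDisj.neg {a} ∈ S) ∧
  (¬ ∃ A : Finset Atom, A.Nonempty ∧ PDisj.neg A ∈ S ∧ ∀ a ∈ A, PDisj.pos {a} ∈ S)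

/-! ### Classical inference for (positive) programs -/

/-- An interpretation `I` satisfies a rule (read classically). -/
def SatisfiesRule (I : Set Atom) (r : Rule Atom) : Prop :=
  ((↑r.bodyPos : Set Atom) ⊆ I ∧ ∀ c ∈ r.bodyNeg, c ∉ I) → ∃ a ∈ r.head, a ∈ I

/-- Classical propositional entailment of a positive disjunction from a program. -/
def Entails (P : Program Atom) (A : Finset Atom) : Prop :=
  ∀ I : Set Atom, (∀ r ∈ P, SatisfiesRule I r) → ∃ a ∈ A, a ∈ I

/-- The least model state of a positive program: all entailed positive disjunctions. -/
def msState (P : Program Atom) : Set (Finset Atom) := {A | A.Nonempty ∧ Entails P A}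

/-- Canonical form: the minimal disjunctions of `S`. -/
def canonical (S : Set (Finset Atom)) : Set (Finset Atom) := {A | A ∈ S ∧ ¬ ∃ A' ∈ S, A' ⊂ A}

/-! ### Argumentation: hypotheses, support, attack, WFDS -/

/-- A hypothesis: a set of (nonempty) negative disjunctions, each represented
by its finite set of atoms. -/
def IsHyp (Δ : Set (Finset Atom)) : Prop := ∀ D ∈ Δ, D.Nonempty

/-- The reduct `P⁺_Δ` of `P` with respect to a hypothesis `Δ`. -/
def reduct (P : Program Atom) (Δ : Set (Finset Atom)) : Program Atom :=
  {r' | ∃ r ∈ P, (∀ c ∈ r.bodyNeg, ({c} : Finset Atom) ∈ Δ) ∧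
    r' = ⟨r.head, r.bodyPos, ∅⟩}

/-- `Δ ⊢_P A`: `Δ` is a supporting hypothesis for the positive disjunction `A`. -/
def Supports (P : Program Atom) (Δ : Set (Finset Atom)) (A : Finset Atom) : Prop :=
  ∃ B : Finset Atom, (∀ b ∈ B, ({b} : Finset Atom) ∈ Δ) ∧
    A ∪ B ∈ canonical (msState (reduct P Δ))

/-- Attack relation, parameterized by a support relation `sup`. -/
def AttacksWith (sup : Set (Finset Atom) → Finset Atom → Prop)
    (Δ Δ' : Set (Finset Atom)) : Prop :=
  (∃ β ∈ Δ', β.Nonempty ∧ ∀ b ∈ β, sup Δ {b}) ∨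
  (∃ B : Finset Atom, B.Nonempty ∧ (∀ b ∈ B, ({b} : Finset Atom) ∈ Δ') ∧ sup Δ B)

/-- The assumption `not a` is admissible with respect to `Δ`. -/
def AdmissibleWith (sup : Set (Finset Atom) → Finset Atom → Prop)
    (Δ : Set (Finset Atom)) (a : Atom) : Prop :=
  ∀ Δ' : Set (Finset Atom), IsHyp Δ' →
    AttacksWith sup Δ' {({a} : Finset Atom)} → AttacksWith sup Δ Δ'

/-- The operator `A_P`. -/
def AOpWith (sup : Set (Finset Atom) → Finset Atom → Prop)
    (Δ : Set (Finset Atom)) : Set (Finset Atom) :=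
  {D | D.Nonempty ∧ ∃ a ∈ D, AdmissibleWith sup Δ a}

/-- The well-founded disjunctive hypothesis: least fixpoint of `A_P`
(obtained by iteration from the empty hypothesis). -/
def WFDHWith (sup : Set (Finset Atom) → Finset Atom → Prop) : Set (Finset Atom) :=
  ⋃ k : ℕ, (AOpWith sup)^[k] ∅

/-- The induced well-founded model state `WFDH ∪ cons(WFDH)`
(closed under super-disjunctions). -/
def WFDSWith (sup : Set (Finset Atom) → Finset Atom → Prop) : Set (PDisj Atom) :=
  stClosure ({d | ∃ D ∈ WFDHWith sup, d = PDisj.neg D} ∪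
    {d | ∃ A : Finset Atom, A.Nonempty ∧ sup (WFDHWith sup) A ∧ d = PDisj.pos A})

/-- The attack relation `⇝_P` of `P`. -/
def Attacks (P : Program Atom) : Set (Finset Atom) → Set (Finset Atom) → Prop :=
  AttacksWith (Supports P)

/-- `WFDH(P)`. -/
def WFDH (P : Program Atom) : Set (Finset Atom) := WFDHWith (Supports P)

/-- `WFDS(P)`, the argumentation-based well-founded semantics. -/
def WFDS (P : Program Atom) : Set (PDisj Atom) := WFDSWith (Supports P)

/-! ### The hyperresolution operator `T^S` and the alternative semantics WFDS' -/

/-- The immediate consequence operator `T_Q^S` of a positive program `Q`. -/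
def TS (Q : Program Atom) (J : Set (Finset Atom)) : Set (Finset Atom) :=
  {A | ∃ r ∈ Q, ∃ f : Atom → Finset Atom,
    (∀ b ∈ r.bodyPos, insert b (f b) ∈ J) ∧ A = r.head ∪ r.bodyPos.biUnion f}

/-- `T_Q^S ↑ ω`. -/
def TSomega (Q : Program Atom) : Set (Finset Atom) := ⋃ k : ℕ, (TS Q)^[k] ∅

/-- `Δ ⊢'_P A`: support via the fixpoint of the hyperresolution operator. -/
def Supports' (P : Program Atom) (Δ : Set (Finset Atom)) (A : Finset Atom) : Prop :=
  ∃ B : Finset Atom, (∀ b ∈ B, ({b} : Finset Atom) ∈ Δ) ∧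
    A ∪ B ∈ TSomega (reduct P Δ)

/-- `WFDS'(P)`: as `WFDS(P)` but with `⊢_P` replaced by `⊢'_P` throughout. -/
def WFDS' (P : Program Atom) : Set (PDisj Atom) := WFDSWith (Supports' P)

/-! ### Program transformations -/

/-- `r'` is an implication of `r`. -/
def Implication (r' r : Rule Atom) : Prop :=
  r.head ⊆ r'.head ∧ r.bodyPos ⊆ r'.bodyPos ∧ r.bodyNeg ⊆ r'.bodyNeg ∧
    (r.head ⊂ r'.head ∨ r.bodyPos ⊂ r'.bodyPos ∨ r.bodyNeg ⊂ r'.bodyNeg)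

/-- `r'` is an s-implication of `r`: `r' ≠ r` and either `r'` is an implication of `r`,
or `r` can be obtained from `r'` by changing some negative body literals of `r'`
into head atoms and possibly removing some body literals. -/
def SImplication (r' r : Rule Atom) : Prop :=
  r' ≠ r ∧ (Implication r' r ∨
    ∃ V ⊆ r'.bodyNeg, r.head = r'.head ∪ V ∧ r.bodyPos ⊆ r'.bodyPos ∧
      r.bodyNeg ⊆ r'.bodyNeg \ V)

/-- Unfolding. -/
def Unfolding (P1 P2 : Program Atom) : Prop :=
  ∃ r ∈ P1, ∃ b ∈ r.bodyPos,
    P2 = (P1 \ {r}) ∪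
      {r'' | ∃ r' ∈ P1, b ∈ r'.head ∧
        r'' = ⟨r.head ∪ r'.head.erase b, r.bodyPos.erase b ∪ r'.bodyPos,
               r.bodyNeg ∪ r'.bodyNeg⟩}

/-- Elimination of tautologies. -/
def ElimTaut (P1 P2 : Program Atom) : Prop :=
  ∃ r ∈ P1, (r.head ∩ r.bodyPos).Nonempty ∧ P2 = P1 \ {r}

/-- Elimination of s-implications. -/
def ElimSImpl (P1 P2 : Program Atom) : Prop :=
  ∃ r' ∈ P1, (∃ r ∈ P1, SImplication r' r) ∧ P2 = P1 \ {r'}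

/-- Elimination of nonminimal rules. -/
def ElimNonmin (P1 P2 : Program Atom) : Prop :=
  ∃ r' ∈ P1, (∃ r ∈ P1, r' ≠ r ∧ Implication r' r) ∧ P2 = P1 \ {r'}

/-- Positive reduction. -/
def PosRed (P1 P2 : Program Atom) : Prop :=
  ∃ r ∈ P1, ∃ c ∈ r.bodyNeg, c ∉ heads P1 ∧
    P2 = (P1 \ {r}) ∪ {(⟨r.head, r.bodyPos, r.bodyNeg.erase c⟩ : Rule Atom)}

/-- Negative reduction. -/
def NegRed (P1 P2 : Program Atom) : Prop :=
  ∃ r ∈ P1, (∃ r' ∈ P1, r'.bodyPos = ∅ ∧ r'.bodyNeg = ∅ ∧ r'.head ⊆ r.bodyNeg) ∧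
    P2 = P1 \ {r}

/-! ### BD-semantics and the transformation-based semantics -/

/-- An (abstract) BD-semantics. -/
structure BDSemantics (Atom : Type) [Fintype Atom] [DecidableEq Atom] where
  sem : Program Atom → Set (PDisj Atom)
  nonempty_mem : ∀ P : Program Atom, IsProgram P → ∀ d ∈ sem P, (PDisj.atomsOf d).Nonempty
  closed : ∀ P : Program Atom, IsProgram P → ∀ d ∈ sem P, ∀ d', SubDisj d d' → d' ∈ sem P
  fact_mem : ∀ P : Program Atom, IsProgram P → ∀ r ∈ P, r.bodyPos = ∅ → r.bodyNeg = ∅ →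
    PDisj.pos r.head ∈ sem P
  neg_mem : ∀ P : Program Atom, IsProgram P → ∀ a : Atom, a ∉ heads P →
    PDisj.neg {a} ∈ sem P

/-- A BD-semantics `S` allows (is invariant under) a program transformation `T`. -/
def Allows (S : BDSemantics Atom) (T : Program Atom → Program Atom → Prop) : Prop :=
  ∀ P1 P2 : Program Atom, IsProgram P1 → IsProgram P2 → T P1 P2 → S.sem P1 = S.sem P2

/-- `S` allows all program transformations in `T*_WFS`. -/
def AllowsStar (S : BDSemantics Atom) : Prop :=
  Allows S Unfolding ∧ Allows S ElimTaut ∧ Allows S ElimSImpl ∧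
    Allows S PosRed ∧ Allows S NegRed

/-- `S` allows all program transformations in `T_WFS`. -/
def AllowsWFSset (S : BDSemantics Atom) : Prop :=
  Allows S Unfolding ∧ Allows S ElimTaut ∧ Allows S ElimNonmin ∧
    Allows S PosRed ∧ Allows S NegRed

/-- `D-WFS*`: the weakest BD-semantics allowing all transformations in `T*_WFS`. -/
def DWFSstar (P : Program Atom) : Set (PDisj Atom) :=
  ⋂ S ∈ {S : BDSemantics Atom | AllowsStar S}, S.sem P

/-- `D-WFS`: the weakest BD-semantics allowing all transformations in `T_WFS`. -/
def DWFS (P : Program Atom) : Set (PDisj Atom) :=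
  ⋂ S ∈ {S : BDSemantics Atom | AllowsWFSset S}, S.sem P

/-! ### The least fixpoint transformation and the strong residual program -/

/-- The generalized consequence operator `T_P^G` on sets of conditional facts. -/
def TG (P : Program Atom) (J : Set (Rule Atom)) : Set (Rule Atom) :=
  {C | ∃ r ∈ P, ∃ hf : Atom → Finset Atom, ∃ bf : Atom → Finset Atom,
    (∀ b ∈ r.bodyPos, (⟨insert b (hf b), ∅, bf b⟩ : Rule Atom) ∈ J) ∧
    C = ⟨r.head ∪ r.bodyPos.biUnion hf, ∅, r.bodyNeg ∪ r.bodyPos.biUnion bf⟩}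

/-- The least fixpoint transformation `Lft(P) = T_P^G ↑ ω`, a negative program. -/
def Lft (P : Program Atom) : Program Atom := ⋃ k : ℕ, (TG P)^[k] ∅

/-- The strong reduction operator `R*` on negative programs. -/
noncomputable def Rstar (N : Program Atom) : Program Atom :=
  {r' | ∃ r ∈ N, (¬ ∃ r'' ∈ N, SImplication r r'') ∧
    r' = ⟨r.head, r.bodyPos, r.bodyNeg.filter (fun c => c ∈ heads N)⟩}

/-- The strong residual program `res*(P)`: the fixpoint reached by iterating `R*`
starting from `Lft(P)`. -/
noncomputable def resStar (P : Program Atom) : Program Atom :=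
  if h : ∃ k : ℕ, Rstar ((Rstar (Atom := Atom))^[k] (Lft P)) = (Rstar (Atom := Atom))^[k] (Lft P)
  then (Rstar (Atom := Atom))^[Nat.find h] (Lft P)
  else ∅

/-! ### Unfounded sets -/

/-- `body(r)` is true with respect to the model state `S`. -/
def BodyTrue (S : Set (PDisj Atom)) (r : Rule Atom) : Prop :=
  (∀ b ∈ r.bodyPos, PDisj.pos {b} ∈ S) ∧ (∀ c ∈ r.bodyNeg, PDisj.neg {c} ∈ S)

/-- `body(r)` is false with respect to the model state `S`. -/
def BodyFalse (S : Set (PDisj Atom)) (r : Rule Atom) : Prop :=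
  (∃ b ∈ r.bodyPos, PDisj.neg {b} ∈ S) ∨ (∃ c ∈ r.bodyNeg, PDisj.pos {c} ∈ S) ∨
  (∃ A : Finset Atom, A.Nonempty ∧ A ⊆ r.bodyNeg ∧ PDisj.pos A ∈ S)

/-- `X` is an unfounded set for `P` with respect to the model state `S`. -/
def Unfounded (P : Program Atom) (S : Set (PDisj Atom)) (X : Set Atom) : Prop :=
  ∀ a ∈ X, ∀ r ∈ P, a ∈ r.head →
    BodyFalse S r ∨ (∃ x ∈ X, x ∈ r.bodyPos) ∨
    (BodyTrue S r → ∃ A : Finset Atom, A.Nonempty ∧ (↑A : Set Atom) ⊆ (↑r.head : Set Atom) \ X ∧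
      PDisj.pos A ∈ S)

/-- The candidate greatest unfounded set: the union of all unfounded sets
(it is the greatest unfounded set exactly when it is itself unfounded). -/
def UP (P : Program Atom) (S : Set (PDisj Atom)) : Set Atom := ⋃₀ {X | Unfounded P S X}

/-- The operator `T_P` on model states. -/
def TPop (P : Program Atom) (S : Set (PDisj Atom)) : Set (Finset Atom) :=
  {A | A.Nonempty ∧ ∃ r ∈ P, BodyTrue S r ∧ A ⊆ r.head ∧
    ∀ a ∈ r.head, a ∉ A → PDisj.neg {a} ∈ S}

/-- The operator `W_P(S) = T_P(S) ∪ not.U_P(S)`. -/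
def WP (P : Program Atom) (S : Set (PDisj Atom)) : Set (PDisj Atom) :=
  {d | ∃ A ∈ TPop P S, d = PDisj.pos A} ∪ {d | ∃ p ∈ UP P S, d = PDisj.neg ({p} : Finset Atom)}

/-- The sequence `W_0 = ∅`, `W_k = W_P(W_{k-1})`. -/
def Wseq (P : Program Atom) (k : ℕ) : Set (PDisj Atom) := (WP P)^[k] ∅

/-- `U-WFS(P)`: the least fixpoint of `W_P` (closed under super-disjunctions). -/
def UWFS (P : Program Atom) : Set (PDisj Atom) := stClosure (⋃ k : ℕ, Wseq P k)


/-! ### Auxiliary development for the self-consistency theorem -/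

section SelfConsistencyProof

/-- Iterates of the operator `A_P`. -/
def itr (P : Program Atom) (k : ℕ) : Set (Finset Atom) :=
  (AOpWith (Supports P))^[k] ∅

lemma itr_zero (P : Program Atom) : itr P 0 = ∅ := rfl

lemma itr_succ (P : Program Atom) (n : ℕ) :
    itr P (n + 1) = AOpWith (Supports P) (itr P n) := by
  simp [itr, Function.iterate_succ_apply']

lemma wfdh_eq (P : Program Atom) : WFDH P = ⋃ k : ℕ, itr P k := rfl

lemma mem_wfdh_iff {P : Program Atom} {D : Finset Atom} :
    D ∈ WFDH P ↔ ∃ k, D ∈ itr P k := Set.mem_iUnion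

lemma itr_subset_wfdh (P : Program Atom) (k : ℕ) : itr P k ⊆ WFDH P := by
  rw [wfdh_eq]
  exact Set.subset_iUnion (fun k => itr P k) k

lemma mem_itr_elim (P : Program Atom) {n : ℕ} {D : Finset Atom} (h : D ∈ itr P n) :
    ∃ p, p + 1 ≤ n ∧ D.Nonempty ∧ ∃ a ∈ D, AdmissibleWith (Supports P) (itr P p) a := by
  cases n with
  | zero => rw [itr_zero] at h; exact absurd h (Set.notMem_empty D)
  | succ p => rw [itr_succ] at h; exact ⟨p, le_rfl, h⟩

lemma sing_itr_elim (P : Program Atom) {n : ℕ} {b : Atom}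
    (h : ({b} : Finset Atom) ∈ itr P n) :
    ∃ p, p + 1 ≤ n ∧ AdmissibleWith (Supports P) (itr P p) b := by
  obtain ⟨p, hp, _, a, ha, hadm⟩ := mem_itr_elim P h
  rw [Finset.mem_singleton] at ha
  exact ⟨p, hp, ha ▸ hadm⟩

lemma isHyp_itr (P : Program Atom) (k : ℕ) : IsHyp (itr P k) := by
  intro D hD
  obtain ⟨p, _, hne, _⟩ := mem_itr_elim P hD
  exact hne

lemma isHyp_wfdh (P : Program Atom) : IsHyp (WFDH P) := by
  intro D hD
  obtain ⟨k, hk⟩ := mem_wfdh_iff.1 hD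
  exact isHyp_itr P k D hk

lemma msState_mono {Q1 Q2 : Program Atom} (h : Q1 ⊆ Q2) : msState Q1 ⊆ msState Q2 := by
  intro A hA
  exact ⟨hA.1, fun I hI => hA.2 I fun r hr => hI r (h hr)⟩

lemma reduct_mono (P : Program Atom) {Δ1 Δ2 : Set (Finset Atom)} (h : Δ1 ⊆ Δ2) :
    reduct P Δ1 ⊆ reduct P Δ2 := by
  rintro r' ⟨r, hr, hneg, rfl⟩
  exact ⟨r, hr, fun c hc => h (hneg c hc), rfl⟩

lemma exists_canonical_subset (Q : Program Atom) :
    ∀ A : Finset Atom, A ∈ msState Q → ∃ D, D ⊆ A ∧ D ∈ canonical (msState Q) := by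
  intro A
  induction A using Finset.strongInductionOn with
  | _ A ih =>
    intro hA
    by_cases h : ∃ A' ∈ msState Q, A' ⊂ A
    · obtain ⟨A', hA', hss⟩ := h
      obtain ⟨D, hD1, hD2⟩ := ih A' hss hA'
      exact ⟨D, Finset.Subset.trans hD1 (subset_of_ssubset hss), hD2⟩
    · exact ⟨A, subset_rfl, hA, h⟩

/-- Absorption: atoms of `A` other than `b` whose singleton negations lie in `Δ`
can be moved to the witness, so `Δ` supports `{b}`. -/
lemma sup_absorb (P : Program Atom) {Δ : Set (Finset Atom)} {A : Finset Atom} {b : Atom}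
    (hb : b ∈ A) (h : ∀ a ∈ A, a ≠ b → ({a} : Finset Atom) ∈ Δ)
    (hsup : Supports P Δ A) : Supports P Δ {b} := by
  obtain ⟨B, hB, hcan⟩ := hsup
  refine ⟨B ∪ A.erase b, ?_, ?_⟩
  · intro x hx
    rcases Finset.mem_union.1 hx with h1 | h2
    · exact hB x h1
    · exact h x (Finset.mem_of_mem_erase h2) (Finset.ne_of_mem_erase h2)
  · have he : ({b} : Finset Atom) ∪ (B ∪ A.erase b) = A ∪ B := by
      ext x
      simp only [Finset.mem_union, Finset.mem_singleton, Finset.mem_erase]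
      constructor
      · rintro (rfl | hx | ⟨_, hx⟩)
        · exact Or.inl hb
        · exact Or.inr hx
        · exact Or.inl hx
      · rintro (hx | hx)
        · by_cases hxb : x = b
          · exact Or.inl hxb
          · exact Or.inr (Or.inr ⟨hxb, hx⟩)
        · exact Or.inr (Or.inl hx)
    rw [he]
    exact hcan

lemma atk_single (P : Program Atom) {Δ : Set (Finset Atom)} {a : Atom}
    (h : Supports P Δ {a}) :
    AttacksWith (Supports P) Δ {({a} : Finset Atom)} := by
  refine Or.inr ⟨{a}, Finset.singleton_nonempty a, ?_, h⟩
  intro b hb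
  rw [Finset.mem_singleton.1 hb]
  rfl

lemma atk_target_mono {sup : Set (Finset Atom) → Finset Atom → Prop}
    {Δ Δ1 Δ2 : Set (Finset Atom)} (h : Δ1 ⊆ Δ2)
    (ha : AttacksWith sup Δ Δ1) : AttacksWith sup Δ Δ2 := by
  rcases ha with ⟨β, hβ, hne, hs⟩ | ⟨B, hne, hmem, hs⟩
  · exact Or.inl ⟨β, h hβ, hne, hs⟩
  · exact Or.inr ⟨B, hne, fun b hb => h (hmem b hb), hs⟩

/-- Transfer of support to a larger hypothesis: either some nonempty
sub-disjunction remains supported, or the larger hypothesis attacks itself. -/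
lemma sup_transfer (P : Program Atom) {Δ1 Δ2 : Set (Finset Atom)} (h12 : Δ1 ⊆ Δ2)
    {A : Finset Atom} (hsup : Supports P Δ1 A) :
    (∃ A', A' ⊆ A ∧ A'.Nonempty ∧ Supports P Δ2 A') ∨
      AttacksWith (Supports P) Δ2 Δ2 := by
  obtain ⟨W, hW, hcan⟩ := hsup
  have hms : A ∪ W ∈ msState (reduct P Δ2) :=
    msState_mono (reduct_mono P h12) hcan.1
  obtain ⟨D, hDsub, hDcan⟩ := exists_canonical_subset _ _ hms
  have hDne : D.Nonempty := hDcan.1.1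
  by_cases hDA : (D ∩ A).Nonempty
  · left
    refine ⟨D ∩ A, Finset.inter_subset_right, hDA, D \ A, ?_, ?_⟩
    · intro x hx
      obtain ⟨hxD, hxA⟩ := Finset.mem_sdiff.1 hx
      rcases Finset.mem_union.1 (hDsub hxD) with h | h
      · exact absurd h hxA
      · exact h12 (hW x h)
    · have he : D ∩ A ∪ D \ A = D := by
        ext x
        simp only [Finset.mem_union, Finset.mem_inter, Finset.mem_sdiff]
        tauto
      rw [he]
      exact hDcan
  · right
    have hDA' : D ∩ A = ∅ := Finset.not_nonempty_iff_eq_empty.1 hDA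
    have hDW : ∀ x ∈ D, x ∈ W := by
      intro x hx
      rcases Finset.mem_union.1 (hDsub hx) with h | h
      · have : x ∈ D ∩ A := Finset.mem_inter.2 ⟨hx, h⟩
        rw [hDA'] at this
        exact absurd this (Finset.notMem_empty x)
      · exact h
    exact Or.inr ⟨D, hDne, fun x hx => h12 (hW x (hDW x hx)),
      ∅, by simp, by simpa using hDcan⟩

/-- Lifting an attack to a larger attacker, modulo self-attack. -/
lemma atk_lift (P : Program Atom) {Δ1 Δ2 Δ' : Set (Finset Atom)} (h12 : Δ1 ⊆ Δ2)
    (h : AttacksWith (Supports P) Δ1 Δ') :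
    AttacksWith (Supports P) Δ2 Δ' ∨ AttacksWith (Supports P) Δ2 Δ2 := by
  by_cases hself : AttacksWith (Supports P) Δ2 Δ2
  · exact Or.inr hself
  left
  rcases h with ⟨β, hβ, hne, hs⟩ | ⟨B, hne, hmem, hs⟩
  · refine Or.inl ⟨β, hβ, hne, fun b hb => ?_⟩
    rcases sup_transfer P h12 (hs b hb) with ⟨A', hA'1, hA'2, hA'3⟩ | hc
    · rcases Finset.subset_singleton_iff.1 hA'1 with h | h
      · exact absurd h (Finset.nonempty_iff_ne_empty.1 hA'2)
      · rw [h] at hA'3; exact hA'3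
    · exact absurd hc hself
  · rcases sup_transfer P h12 hs with ⟨B', h1, h2, h3⟩ | hc
    · exact Or.inr ⟨B', h2, fun b hb => hmem b (h1 hb), h3⟩
    · exact absurd hc hself

/-- The main induction: the iterates of `A_P` never attack one another, and
the iteration is increasing. -/
lemma itr_inv (P : Program Atom) :
    ∀ n : ℕ, (∀ j, j < n → itr P j ⊆ itr P (j + 1)) ∧
      (∀ r, r ≤ n → ∀ j, j ≤ n →
        ¬ AttacksWith (Supports P) (itr P r) (itr P j)) := by
  intro n
  induction n with
  | zero =>
    refine ⟨fun j hj => absurd hj (Nat.not_lt_zero j), ?_⟩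
    intro r hr j hj
    obtain rfl := Nat.le_zero.1 hr
    obtain rfl := Nat.le_zero.1 hj
    rintro (⟨β, hβ, _, _⟩ | ⟨B, hBne, hmem, _⟩)
    · rw [itr_zero] at hβ; exact absurd hβ (Set.notMem_empty β)
    · obtain ⟨b, hb⟩ := hBne
      have := hmem b hb
      rw [itr_zero] at this
      exact absurd this (Set.notMem_empty _)
  | succ n ih =>
    obtain ⟨ihc, ihna⟩ := ih
    have chain_le : ∀ i j, i ≤ j → j ≤ n → itr P i ⊆ itr P j := by
      intro i j hij hjn
      induction j with
      | zero => obtain rfl := Nat.le_zero.1 hij; exact subset_rfl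
      | succ m ihm =>
        rcases Nat.lt_or_ge i (m + 1) with h | h
        · exact Set.Subset.trans
            (ihm (Nat.lt_succ_iff.1 h) (Nat.le_trans (Nat.le_succ m) hjn))
            (ihc m (Nat.lt_of_succ_le hjn))
        · obtain rfl : i = m + 1 := Nat.le_antisymm hij h
          exact subset_rfl
    -- admissibility is monotone along the (known-good) chain up to n
    have adm_mono : ∀ {p : ℕ} {a : Atom}, p ≤ n →
        AdmissibleWith (Supports P) (itr P p) a →
        AdmissibleWith (Supports P) (itr P n) a := by
      intro p a hp hadm Δ' hΔ' hatk
      rcases atk_lift P (chain_le p n hp le_rfl) (hadm Δ' hΔ' hatk) with h | h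
      · exact h
      · exact absurd h (ihna n le_rfl n le_rfl)
    have adm_of_sing : ∀ {b : Atom}, ({b} : Finset Atom) ∈ itr P (n + 1) →
        AdmissibleWith (Supports P) (itr P n) b := by
      intro b hbmem
      obtain ⟨p, hp, hadm⟩ := sing_itr_elim P hbmem
      exact adm_mono (Nat.le_of_succ_le_succ hp) hadm
    have adm_of_mem : ∀ {β : Finset Atom}, β ∈ itr P (n + 1) →
        ∃ a ∈ β, AdmissibleWith (Supports P) (itr P n) a := by
      intro β hβ
      obtain ⟨p, hp, _, a, ha, hadm⟩ := mem_itr_elim P hβ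
      exact ⟨a, ha, adm_mono (Nat.le_of_succ_le_succ hp) hadm⟩
    -- the chain extends one more step
    have step1 : itr P n ⊆ itr P (n + 1) := by
      intro D hD
      obtain ⟨p, hp, hDne, a, ha, hadm⟩ := mem_itr_elim P hD
      rw [itr_succ]
      refine ⟨hDne, a, ha, ?_⟩
      exact adm_mono (Nat.le_of_succ_le hp) hadm
    have chain_le' : ∀ i j, i ≤ j → j ≤ n + 1 → itr P i ⊆ itr P j := by
      intro i j hij hjn
      rcases Nat.lt_or_ge j (n + 1) with h | h
      · exact chain_le i j hij (Nat.lt_succ_iff.1 h)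
      · obtain rfl : j = n + 1 := Nat.le_antisymm hjn h
        rcases Nat.lt_or_ge i (n + 1) with h2 | h2
        · exact Set.Subset.trans (chain_le i n (Nat.lt_succ_iff.1 h2) le_rfl) step1
        · obtain rfl : i = n + 1 := Nat.le_antisymm hij h2
          exact subset_rfl
    -- key lemma: `itr P n` cannot support a disjunction of atoms all of which
    -- are admissible with respect to `itr P n`
    have keylem : ∀ B : Finset Atom, B.Nonempty →
        (∀ b ∈ B, AdmissibleWith (Supports P) (itr P n) b) →
        ¬ Supports P (itr P n) B := by
      intro B
      induction B using Finset.strongInductionOn with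
      | _ B ihB =>
        intro hBne hBadm hBsup
        obtain ⟨b, hb⟩ := hBne
        set Δ' : Set (Finset Atom) :=
          itr P n ∪ {S | ∃ x ∈ B.erase b, S = ({x} : Finset Atom)} with hΔ'def
        have memΔ'_itr : itr P n ⊆ Δ' := by
          rw [hΔ'def]; exact Set.subset_union_left
        have memΔ'_sing : ∀ {x : Atom}, x ∈ B.erase b → ({x} : Finset Atom) ∈ Δ' := by
          intro x hx
          rw [hΔ'def]
          exact Set.mem_union_right _ ⟨x, hx, rfl⟩
        have memΔ'_elim : ∀ {S : Finset Atom}, S ∈ Δ' →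
            S ∈ itr P n ∨ ∃ x ∈ B.erase b, S = ({x} : Finset Atom) := by
          intro S hS
          rw [hΔ'def] at hS
          exact hS
        have hypΔ' : IsHyp Δ' := by
          intro D hD
          rcases memΔ'_elim hD with h | ⟨x, _, rfl⟩
          · exact isHyp_itr P n D h
          · exact Finset.singleton_nonempty x
        have dagger : ∀ m, m ≤ n → ¬ AttacksWith (Supports P) (itr P m) Δ' := by
          intro m hm hatk
          rcases hatk with ⟨β, hβ, hβne, hβsup⟩ | ⟨C, hCne, hCmem, hCsup⟩
          · rcases memΔ'_elim hβ with hβn | ⟨x, hx, rfl⟩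
            · obtain ⟨p, hp, _, a, ha, hadm⟩ := mem_itr_elim P hβn
              exact ihna p (Nat.le_of_succ_le hp) m hm
                (hadm _ (isHyp_itr P m) (atk_single P (hβsup a ha)))
            · have hadm := hBadm x (Finset.mem_of_mem_erase hx)
              exact ihna n le_rfl m hm
                (hadm _ (isHyp_itr P m)
                  (atk_single P (hβsup x (Finset.mem_singleton_self x))))
          · rcases sup_transfer P (chain_le m n hm le_rfl) hCsup with
              ⟨C', hC'C, hC'ne, hC'sup⟩ | hself
            · set X : Finset Atom :=
                C'.filter (fun x => ({x} : Finset Atom) ∈ itr P n) with hXdef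
              by_cases hY : (C' \ X).Nonempty
              · have hYB : C' \ X ⊆ B.erase b := by
                  intro y hy
                  obtain ⟨hyC, hyX⟩ := Finset.mem_sdiff.1 hy
                  rcases memΔ'_elim (hCmem y (hC'C hyC)) with h | ⟨x, hx, hxe⟩
                  · exact absurd (Finset.mem_filter.2 ⟨hyC, h⟩) hyX
                  · have : y = x := Finset.singleton_injective hxe
                    exact this ▸ hx
                have hsupY : Supports P (itr P n) (C' \ X) := by
                  obtain ⟨W2, hW2, hcan2⟩ := hC'sup
                  refine ⟨W2 ∪ X, ?_, ?_⟩
                  · intro x hx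
                    rcases Finset.mem_union.1 hx with h | h
                    · exact hW2 x h
                    · exact (Finset.mem_filter.1 h).2
                  · have he : (C' \ X) ∪ (W2 ∪ X) = C' ∪ W2 := by
                      have hXC : X ⊆ C' := Finset.filter_subset _ _
                      ext z
                      simp only [Finset.mem_union, Finset.mem_sdiff]
                      constructor
                      · rintro (⟨h1, _⟩ | h1 | h1)
                        · exact Or.inl h1
                        · exact Or.inr h1
                        · exact Or.inl (hXC h1)
                      · rintro (h1 | h1)
                        · by_cases h2 : z ∈ X
                          · exact Or.inr (Or.inr h2)
                          · exact Or.inl ⟨h1, h2⟩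
                        · exact Or.inr (Or.inl h1)
                    rw [he]
                    exact hcan2
                have hYss : C' \ X ⊂ B :=
                  ssubset_of_subset_of_ssubset hYB (Finset.erase_ssubset hb)
                exact ihB _ hYss hY
                  (fun y hy => hBadm y (Finset.mem_of_mem_erase (hYB hy))) hsupY
              · have hallX : ∀ x ∈ C', ({x} : Finset Atom) ∈ itr P n := by
                  intro x hx
                  by_contra hxn
                  exact hY ⟨x, Finset.mem_sdiff.2
                    ⟨hx, fun hxX => hxn (Finset.mem_filter.1 hxX).2⟩⟩
                exact ihna n le_rfl n le_rfl (Or.inr ⟨C', hC'ne, hallX, hC'sup⟩)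
            · exact ihna n le_rfl n le_rfl hself
        -- now derive the contradiction from `hBsup`
        obtain ⟨W, hW, hcan⟩ := hBsup
        have hms2 : B ∪ W ∈ msState (reduct P Δ') :=
          msState_mono (reduct_mono P memΔ'_itr) hcan.1
        obtain ⟨D, hDsub, hDcan⟩ := exists_canonical_subset _ _ hms2
        have hDne : D.Nonempty := hDcan.1.1
        have supD : Supports P Δ' D := ⟨∅, by simp, by simpa using hDcan⟩
        by_cases hbD : b ∈ D
        · have hsupb : Supports P Δ' {b} := by
            refine sup_absorb P hbD ?_ supD
            intro z hz hzb
            rcases Finset.mem_union.1 (hDsub hz) with h | h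
            · exact memΔ'_sing (Finset.mem_erase.2 ⟨hzb, h⟩)
            · exact memΔ'_itr (hW z h)
          exact dagger n le_rfl (hBadm b hb _ hypΔ' (atk_single P hsupb))
        · by_cases hDB : (D ∩ B).Nonempty
          · obtain ⟨y, hy⟩ := hDB
            obtain ⟨hyD, hyB⟩ := Finset.mem_inter.1 hy
            have hsupy : Supports P Δ' {y} := by
              refine sup_absorb P hyD ?_ supD
              intro z hz _
              rcases Finset.mem_union.1 (hDsub hz) with h | h
              · have hzb : z ≠ b := fun he => hbD (he ▸ hz)
                exact memΔ'_sing (Finset.mem_erase.2 ⟨hzb, h⟩)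
              · exact memΔ'_itr (hW z h)
            exact dagger n le_rfl (hBadm y hyB _ hypΔ' (atk_single P hsupy))
          · have hDW : ∀ z ∈ D, z ∈ W := by
              intro z hz
              rcases Finset.mem_union.1 (hDsub hz) with h | h
              · exact absurd ⟨z, Finset.mem_inter.2 ⟨hz, h⟩⟩ hDB
              · exact h
            obtain ⟨d, hd⟩ := hDne
            have hsupd : Supports P Δ' {d} := by
              refine sup_absorb P hd ?_ supD
              intro z hz _
              exact memΔ'_itr (hW z (hDW z hz))
            obtain ⟨p, hp, hadm⟩ := sing_itr_elim P (hW d (hDW d hd))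
            exact dagger p (Nat.le_of_succ_le hp)
              (hadm _ hypΔ' (atk_single P hsupd))
    have step2a : ∀ r, r ≤ n →
        ¬ AttacksWith (Supports P) (itr P r) (itr P (n + 1)) := by
      intro r hr hatk
      rcases hatk with ⟨β, hβ, hβne, hβsup⟩ | ⟨B, hBne, hBmem, hBsup⟩
      · obtain ⟨a, ha, hadm⟩ := adm_of_mem hβ
        exact ihna n le_rfl r hr
          (hadm _ (isHyp_itr P r) (atk_single P (hβsup a ha)))
      · rcases sup_transfer P (chain_le r n hr le_rfl) hBsup with
          ⟨B', h1, h2, h3⟩ | hself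
        · exact keylem B' h2 (fun x hx => adm_of_sing (hBmem x (h1 hx))) h3
        · exact ihna n le_rfl n le_rfl hself
    have step2b : ¬ AttacksWith (Supports P) (itr P (n + 1)) (itr P (n + 1)) := by
      intro hatk
      rcases hatk with ⟨β, hβ, hβne, hβsup⟩ | ⟨B, hBne, hBmem, hBsup⟩
      · obtain ⟨a, ha, hadm⟩ := adm_of_mem hβ
        exact step2a n le_rfl
          (hadm _ (isHyp_itr P (n + 1)) (atk_single P (hβsup a ha)))
      · obtain ⟨b, hb⟩ := hBne
        have hsupb : Supports P (itr P (n + 1)) {b} :=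
          sup_absorb P hb (fun a ha _ => hBmem a ha) hBsup
        exact step2a n le_rfl
          ((adm_of_sing (hBmem b hb)) _ (isHyp_itr P (n + 1)) (atk_single P hsupb))
    refine ⟨?_, ?_⟩
    · intro j hj
      rcases Nat.lt_or_ge j n with h | h
      · exact ihc j h
      · obtain rfl : j = n := Nat.le_antisymm (Nat.lt_succ_iff.1 hj) h
        exact step1
    · intro r hr j hj hatk
      rcases Nat.lt_or_ge j (n + 1) with hjn | hjn
      · have hjn' : j ≤ n := Nat.lt_succ_iff.1 hjn
        rcases Nat.lt_or_ge r (n + 1) with hrn | hrn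
        · exact ihna r (Nat.lt_succ_iff.1 hrn) j hjn' hatk
        · obtain rfl : r = n + 1 := Nat.le_antisymm hr hrn
          exact step2b (atk_target_mono
            (chain_le' j (n + 1) (Nat.le_trans hjn' (Nat.le_succ n)) le_rfl) hatk)
      · obtain rfl : j = n + 1 := Nat.le_antisymm hj hjn
        rcases Nat.lt_or_ge r (n + 1) with hrn | hrn
        · exact step2a r (Nat.lt_succ_iff.1 hrn) hatk
        · obtain rfl : r = n + 1 := Nat.le_antisymm hr hrn
          exact step2b hatk

lemma itr_step (P : Program Atom) (j : ℕ) : itr P j ⊆ itr P (j + 1) :=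
  (itr_inv P (j + 1)).1 j (Nat.lt_succ_self j)

lemma itr_mono (P : Program Atom) {i j : ℕ} (h : i ≤ j) : itr P i ⊆ itr P j := by
  induction j with
  | zero => obtain rfl := Nat.le_zero.1 h; exact subset_rfl
  | succ m ihm =>
    rcases Nat.lt_or_ge i (m + 1) with h2 | h2
    · exact Set.Subset.trans (ihm (Nat.lt_succ_iff.1 h2)) (itr_step P m)
    · obtain rfl : i = m + 1 := Nat.le_antisymm h h2
      exact subset_rfl

lemma no_atk_itr (P : Program Atom) (r j : ℕ) :
    ¬ AttacksWith (Supports P) (itr P r) (itr P j) :=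
  (itr_inv P (max r j)).2 r (le_max_left r j) j (le_max_right r j)

lemma exists_bound (P : Program Atom) (B : Finset Atom) :
    (∀ b ∈ B, ({b} : Finset Atom) ∈ WFDH P) →
    ∃ K, ∀ b ∈ B, ({b} : Finset Atom) ∈ itr P K := by
  induction B using Finset.induction_on with
  | empty => intro _; exact ⟨0, by simp⟩
  | insert a s ha ih =>
    intro h
    obtain ⟨K1, hK1⟩ := ih (fun b hb => h b (Finset.mem_insert_of_mem hb))
    obtain ⟨K2, hK2⟩ := mem_wfdh_iff.1 (h a (Finset.mem_insert_self a s))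
    refine ⟨max K1 K2, ?_⟩
    intro b hb
    rcases Finset.mem_insert.1 hb with rfl | hbs
    · exact itr_mono P (le_max_right K1 K2) hK2
    · exact itr_mono P (le_max_left K1 K2) (hK1 b hbs)

lemma no_atk_itr_wfdh (P : Program Atom) (m : ℕ) :
    ¬ AttacksWith (Supports P) (itr P m) (WFDH P) := by
  rintro (⟨β, hβ, hβne, hβsup⟩ | ⟨B, hBne, hBmem, hBsup⟩)
  · obtain ⟨s, hs⟩ := mem_wfdh_iff.1 hβ
    exact no_atk_itr P m s (Or.inl ⟨β, hs, hβne, hβsup⟩)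
  · obtain ⟨K, hK⟩ := exists_bound P B hBmem
    exact no_atk_itr P m K (Or.inr ⟨B, hBne, hK, hBsup⟩)

lemma no_atk_wfdh_itr (P : Program Atom) (k : ℕ) :
    ¬ AttacksWith (Supports P) (WFDH P) (itr P k) := by
  rintro (⟨β, hβ, hβne, hβsup⟩ | ⟨B, hBne, hBmem, hBsup⟩)
  · obtain ⟨p, _, _, a, ha, hadm⟩ := mem_itr_elim P hβ
    exact no_atk_itr_wfdh P p
      (hadm _ (isHyp_wfdh P) (atk_single P (hβsup a ha)))
  · obtain ⟨b, hb⟩ := hBne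
    have hsupb : Supports P (WFDH P) {b} :=
      sup_absorb P hb (fun a ha _ => itr_subset_wfdh P k (hBmem a ha)) hBsup
    obtain ⟨p, _, hadm⟩ := sing_itr_elim P (hBmem b hb)
    exact no_atk_itr_wfdh P p (hadm _ (isHyp_wfdh P) (atk_single P hsupb))

lemma wfdh_not_self_atk (P : Program Atom) :
    ¬ AttacksWith (Supports P) (WFDH P) (WFDH P) := by
  rintro (⟨β, hβ, hβne, hβsup⟩ | ⟨B, hBne, hBmem, hBsup⟩)
  · obtain ⟨s, hs⟩ := mem_wfdh_iff.1 hβ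
    exact no_atk_wfdh_itr P s (Or.inl ⟨β, hs, hβne, hβsup⟩)
  · obtain ⟨K, hK⟩ := exists_bound P B hBmem
    exact no_atk_wfdh_itr P K (Or.inr ⟨B, hBne, hK, hBsup⟩)

lemma subDisj_atoms {d d' : PDisj Atom} (h : SubDisj d d') :
    d.atomsOf ⊆ d'.atomsOf := by
  cases d with
  | pos A =>
    cases d' with
    | pos B => exact h
    | neg B => exact h.elim
  | neg A =>
    cases d' with
    | pos B => exact h.elim
    | neg B => exact h

lemma subDisj_trans {a b c : PDisj Atom} (h1 : SubDisj a b) (h2 : SubDisj b c) :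
    SubDisj a c := by
  cases a <;> cases b <;> cases c <;>
    first
      | exact h1.elim
      | exact h2.elim
      | exact Finset.Subset.trans h1 h2

end SelfConsistencyProof

/-- For any propositional disjunctive logic program `P`, the well-founded
disjunctive hypothesis `WFDH(P)` is self-consistent (it does not attack itself), and
consequently `WFDS(P) = WFDH(P) ∪ cons_P(WFDH(P))` is a consistent model state. -/
theorem wfdh_selfConsistent_wfds_consistent
    {Atom : Type} [Fintype Atom] [DecidableEq Atom]
    (P : Program Atom) (hP : IsProgram P) :
    ¬ Attacks P (WFDH P) (WFDH P) ∧
    IsModelState (WFDS P) ∧ ConsistentState (WFDS P) := by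
  have hself := wfdh_not_self_atk P
  refine ⟨hself, ⟨?_, ?_⟩, ?_, ?_⟩
  · rintro d' ⟨d, hd, hsub⟩
    have hne : (PDisj.atomsOf d).Nonempty := by
      rcases hd with ⟨D, hD, rfl⟩ | ⟨A, hAne, _, rfl⟩
      · exact isHyp_wfdh P D hD
      · exact hAne
    exact Finset.Nonempty.mono (subDisj_atoms hsub) hne
  · rintro d ⟨d0, hd0, hsub⟩ d' hsub'
    exact ⟨d0, hd0, subDisj_trans hsub hsub'⟩
  · rintro ⟨A, hAne, hpos, hneg⟩
    obtain ⟨d0, hd0, hsub⟩ := hpos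
    rcases hd0 with ⟨D, hD, rfl⟩ | ⟨A0, hA0ne, hA0sup, rfl⟩
    · exact hsub
    · have hsing : ∀ a ∈ A0, ({a} : Finset Atom) ∈ WFDH P := by
        intro a ha
        obtain ⟨d1, hd1, hsub1⟩ := hneg a (hsub ha)
        rcases hd1 with ⟨D, hD, rfl⟩ | ⟨A1, _, _, rfl⟩
        · have hDne : D.Nonempty := isHyp_wfdh P D hD
          have hDe : D = {a} := by
            rcases Finset.subset_singleton_iff.1 hsub1 with h | h
            · exact absurd h (Finset.nonempty_iff_ne_empty.1 hDne)
            · exact h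
          exact hDe ▸ hD
        · exact hsub1.elim
      exact hself (Or.inr ⟨A0, hA0ne, hsing, hA0sup⟩)
  · rintro ⟨A, hAne, hneg, hpos⟩
    obtain ⟨d0, hd0, hsub⟩ := hneg
    rcases hd0 with ⟨D, hD, rfl⟩ | ⟨A0, _, _, rfl⟩
    · have hsup : ∀ b ∈ D, Supports P (WFDH P) {b} := by
        intro b hb
        obtain ⟨d1, hd1, hsub1⟩ := hpos b (hsub hb)
        rcases hd1 with ⟨D1, _, rfl⟩ | ⟨A1, hA1ne, hA1sup, rfl⟩
        · exact hsub1.elim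
        · have hA1e : A1 = {b} := by
            rcases Finset.subset_singleton_iff.1 hsub1 with h | h
            · exact absurd h (Finset.nonempty_iff_ne_empty.1 hA1ne)
            · exact h
          exact hA1e ▸ hA1sup
      exact hself (Or.inl ⟨D, hD, isHyp_wfdh P D hD, hsup⟩)
    · exact hsub


end DLP
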